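/- For every finite simple graph G with at least one edge, χ_{vi,1}(G) = χ(T_{vi,1}(G)), where T_{vi,1}(G) is the graph on vertex set V(G) × {1,2} in which (v,i) and (u,j) are adjacent iff: i=j=1 and d_G(v,u)=1; or i=j=2 and 1 ≤ d_G(v,u) ≤ 2; or i≠j and 0 ≤ d_G(v,u) ≤ 1. -/

import Mathlib

open SimpleGraph

variable {V : Type*}

/-- An *incidence* of `G`: a pair `(v, e)` where `e` is an edge of `G` and `v ∈ e`. -/
abbrev Inc (G : SimpleGraph V) : Type _ :=
  {p : V × Sym2 V // p.2 ∈ G.edgeSet ∧ p.1 ∈ p.2}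

/-- The elements to be colored in a vi-simultaneous coloring: vertices together with
incidences. -/
abbrev VIElem (G : SimpleGraph V) : Type _ := V ⊕ Inc G

/-- Adjacency between elements of `V(G) ∪ I(G)`: two vertices are adjacent when they are
adjacent in `G`; a vertex `u` and an incidence `(w, f)` are adjacent when `u ∈ f`; two
distinct incidences `(v, e)`, `(w, f)` are adjacent when `v = w`, or `e = f`, or
`{v, w} = e`, or `{v, w} = f`. -/
def VIAdj (G : SimpleGraph V) : VIElem G → VIElem G → Prop
  | Sum.inl u, Sum.inl w => G.Adj u w
  | Sum.inl u, Sum.inr i => u ∈ i.1.2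
  | Sum.inr i, Sum.inl u => u ∈ i.1.2
  | Sum.inr i, Sum.inr j => i ≠ j ∧
      (i.1.1 = j.1.1 ∨ i.1.2 = j.1.2 ∨ s(i.1.1, j.1.1) = i.1.2 ∨ s(i.1.1, j.1.1) = j.1.2)

/-- A vi-simultaneous proper `k`-coloring of `G`: adjacent or incident elements of
`V(G) ∪ I(G)` receive distinct colors. -/
def IsVIColoring (G : SimpleGraph V) {k : ℕ} (c : VIElem G → Fin k) : Prop :=
  ∀ a b, VIAdj G a b → c a ≠ c b

/-- The vi-simultaneous chromatic number `χ_vi(G)`: the least `k` admitting a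
vi-simultaneous proper `k`-coloring. -/
noncomputable def chiVI (G : SimpleGraph V) : ℕ :=
  sInf {k | ∃ c : VIElem G → Fin k, IsVIColoring G c}

/-- `I₂(v)`: the set of second incidences of a vertex `v`, i.e. incidences `(u, e)` with
`e = {u, v}` and `u ≠ v`. -/
def I2 (G : SimpleGraph V) (v : V) : Set (Inc G) :=
  {i | i.1.1 ≠ v ∧ i.1.2 = s(i.1.1, v)}

/-- A vi-simultaneous `(k, s)`-coloring: a vi-simultaneous proper `k`-coloring in which at
most `s` distinct colors appear on `I₂(v)` for every vertex `v`. -/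
def IsVISColoring (G : SimpleGraph V) (s : ℕ) {k : ℕ} (c : VIElem G → Fin k) : Prop :=
  IsVIColoring G c ∧ ∀ v : V, ((fun i => c (Sum.inr i)) '' I2 G v).ncard ≤ s

/-- `χ_{vi,s}(G)`: the least `k` admitting a vi-simultaneous `(k, s)`-coloring. -/
noncomputable def chiVIS (G : SimpleGraph V) (s : ℕ) : ℕ :=
  sInf {k | ∃ c : VIElem G → Fin k, IsVISColoring G s c}

/-- The maximum degree `Δ(G)` of a finite graph. -/
noncomputable def maxDeg [Fintype V] (G : SimpleGraph V) : ℕ :=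
  Finset.univ.sup fun v => (G.neighborSet v).ncard

/-- The graph `T_{vi,1}(G)` on `V(G) × {1, 2}` (here `0 : Fin 2` plays the role of `1`
and `1 : Fin 2` the role of `2`): `(v, i)` and `(u, j)` are adjacent iff
`i = j = 1` and `d_G(v, u) = 1`; or `i = j = 2` and `1 ≤ d_G(v, u) ≤ 2`; or
`i ≠ j` and `0 ≤ d_G(v, u) ≤ 1`. -/
def Tvi1 (G : SimpleGraph V) : SimpleGraph (V × Fin 2) where
  Adj x y :=
    (x.2 = 0 ∧ y.2 = 0 ∧ G.Adj x.1 y.1) ∨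
    (x.2 = 1 ∧ y.2 = 1 ∧ x.1 ≠ y.1 ∧ ∃ w : G.Walk x.1 y.1, w.length ≤ 2) ∨
    (x.2 ≠ y.2 ∧ (x.1 = y.1 ∨ G.Adj x.1 y.1))
  symm := by
    constructor
    rintro x y (⟨h1, h2, h3⟩ | ⟨h1, h2, h3, w, hw⟩ | ⟨h1, h2⟩)
    · exact Or.inl ⟨h2, h1, h3.symm⟩
    · exact Or.inr (Or.inl ⟨h2, h1, h3.symm, w.reverse, by simpa using hw⟩)
    · exact Or.inr (Or.inr ⟨h1.symm, h2.imp Eq.symm fun h => h.symm⟩)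
  loopless := by
    constructor
    rintro x (⟨-, -, h⟩ | ⟨-, -, h, -⟩ | ⟨h, -⟩)
    · exact G.irrefl h
    · exact h rfl
    · exact h rfl

section Helpers

set_option linter.unusedSectionVars false

variable {V : Type*} [DecidableEq V] {G : SimpleGraph V}

private lemma oth_spec (i : Inc G) :
    s(i.1.1, Sym2.Mem.other' i.2.2) = i.1.2 := Sym2.other_spec' i.2.2

private lemma adj_oth (i : Inc G) :
    G.Adj i.1.1 (Sym2.Mem.other' i.2.2) := by
  rw [← SimpleGraph.mem_edgeSet, oth_spec]; exact i.2.1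

private lemma inc_ext {i j : Inc G} (h1 : i.1.1 = j.1.1) (h2 : i.1.2 = j.1.2) : i = j :=
  Subtype.ext (Prod.ext h1 h2)

private def mkInc (G : SimpleGraph V) {a v : V} (hav : G.Adj a v) : Inc G :=
  ⟨(a, s(a, v)), hav, Sym2.mem_mk_left _ _⟩

private lemma mkInc_mem {a v : V} (hav : G.Adj a v) : mkInc G hav ∈ I2 G v :=
  ⟨hav.ne, rfl⟩

private lemma colorable_to_vis (G : SimpleGraph V) {k : ℕ}
    (h : (Tvi1 G).Colorable k) : ∃ c : VIElem G → Fin k, IsVISColoring G 1 c := by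
  classical
  obtain ⟨f⟩ := h
  refine ⟨fun x => match x with
    | Sum.inl v => f (v, 0)
    | Sum.inr i => f (Sym2.Mem.other' i.2.2, 1), ?_, ?_⟩
  · rintro (u | i) (w | j) hab
    · exact f.valid (Or.inl ⟨rfl, rfl, hab⟩)
    · have hab' : u ∈ j.1.2 := hab
      rw [← oth_spec j, Sym2.mem_iff] at hab'
      refine f.valid (Or.inr (Or.inr ⟨by simp, ?_⟩))
      rcases hab' with h1 | h1
      · refine Or.inr ?_
        rw [h1]; exact adj_oth j
      · exact Or.inl h1
    · have hab' : w ∈ i.1.2 := hab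
      rw [← oth_spec i, Sym2.mem_iff] at hab'
      refine (f.valid (Or.inr (Or.inr ⟨by simp, ?_⟩))).symm
      rcases hab' with h1 | h1
      · refine Or.inr ?_
        rw [h1]; exact adj_oth i
      · exact Or.inl h1
    · obtain ⟨hij, hd⟩ := hab
      by_cases huw : i.1.1 = j.1.1
      · have hne : Sym2.Mem.other' i.2.2 ≠ Sym2.Mem.other' j.2.2 := by
          intro hab'
          apply hij
          refine inc_ext huw ?_
          rw [← oth_spec i, ← oth_spec j]
          exact congrArg₂ (fun x y => s(x, y)) huw hab'
        have hadj2 : G.Adj i.1.1 (Sym2.Mem.other' j.2.2) := by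
          rw [huw]; exact adj_oth j
        exact f.valid (Or.inr (Or.inl ⟨rfl, rfl, hne,
          SimpleGraph.Walk.cons (adj_oth i).symm
            (SimpleGraph.Walk.cons hadj2 SimpleGraph.Walk.nil), by simp⟩))
      · have hAdj : G.Adj (Sym2.Mem.other' i.2.2) (Sym2.Mem.other' j.2.2) := by
          rcases hd with h1 | h1 | h1 | h1
          · exact absurd h1 huw
          · have h2 : s(i.1.1, Sym2.Mem.other' i.2.2)
                = s(j.1.1, Sym2.Mem.other' j.2.2) := by
              rw [oth_spec, oth_spec, h1]
            rw [Sym2.eq_iff] at h2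
            rcases h2 with ⟨h3, _⟩ | ⟨h3, h4⟩
            · exact absurd h3 huw
            · rw [h4]; exact adj_oth j
          · have h2 : s(i.1.1, j.1.1) = s(i.1.1, Sym2.Mem.other' i.2.2) := by
              rw [oth_spec, h1]
            rw [Sym2.eq_iff] at h2
            rcases h2 with ⟨_, h3⟩ | ⟨h3, _⟩
            · rw [← h3]; exact adj_oth j
            · exact absurd h3 (adj_oth i).ne
          · have h2 : s(i.1.1, j.1.1) = s(j.1.1, Sym2.Mem.other' j.2.2) := by
              rw [oth_spec, h1]
            rw [Sym2.eq_iff] at h2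
            rcases h2 with ⟨h3, _⟩ | ⟨h3, _⟩
            · exact absurd h3 huw
            · rw [← h3]; exact (adj_oth i).symm
        exact f.valid (Or.inr (Or.inl ⟨rfl, rfl, hAdj.ne,
          SimpleGraph.Walk.cons hAdj SimpleGraph.Walk.nil, by simp⟩))
  · intro v
    have hsub : ((fun i => f (Sym2.Mem.other' i.2.2, 1)) '' I2 G v) ⊆ {f (v, 1)} := by
      rintro x ⟨i, ⟨hi1, hi2⟩, rfl⟩
      have h2 : s(i.1.1, Sym2.Mem.other' i.2.2) = s(i.1.1, v) := by
        rw [oth_spec, hi2]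
      rw [Sym2.eq_iff] at h2
      rcases h2 with ⟨_, h3⟩ | ⟨h3, _⟩
      · simp [h3]
      · exact absurd h3 hi1
    calc ((fun i => f (Sym2.Mem.other' i.2.2, 1)) '' I2 G v).ncard
        ≤ ({f (v, 1)} : Set (Fin k)).ncard :=
          Set.ncard_le_ncard hsub (Set.finite_singleton _)
      _ = 1 := Set.ncard_singleton _

private lemma vis_to_colorable (G : SimpleGraph V) (hG : G.edgeSet.Nonempty) {k : ℕ}
    (h : ∃ c : VIElem G → Fin k, IsVISColoring G 1 c) : (Tvi1 G).Colorable k := by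
  classical
  obtain ⟨c, hc, hI⟩ := h
  obtain ⟨u0, w0, huw0⟩ : ∃ u w, G.Adj u w := by
    obtain ⟨e, he⟩ := hG
    induction e using Sym2.ind with
    | _ x y => exact ⟨x, y, he⟩
  have hnt : Nontrivial (Fin k) := by
    refine ⟨c (Sum.inl u0), c (Sum.inr (mkInc G huw0)), ?_⟩
    exact hc _ _ (Sym2.mem_mk_left u0 w0 : u0 ∈ (mkInc G huw0).1.2)
  set t : V → Fin k := fun v =>
    if hv : ∃ u, G.Adj u v then c (Sum.inr (mkInc G hv.choose_spec))
    else (exists_ne (c (Sum.inl v))).choose with htdef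
  have ht : ∀ (v : V) (i : Inc G), i ∈ I2 G v → c (Sum.inr i) = t v := by
    intro v i hi
    have hadj : G.Adj i.1.1 v := by
      rw [← SimpleGraph.mem_edgeSet, ← hi.2]; exact i.2.1
    have hv : ∃ u, G.Adj u v := ⟨i.1.1, hadj⟩
    have hone := (Set.ncard_le_one (Set.toFinite _)).mp (hI v)
    have h1 : c (Sum.inr i) ∈ (fun i => c (Sum.inr i)) '' I2 G v := ⟨i, hi, rfl⟩
    have h2 : c (Sum.inr (mkInc G hv.choose_spec)) ∈
        (fun i => c (Sum.inr i)) '' I2 G v := ⟨_, mkInc_mem _, rfl⟩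
    rw [htdef]; simp only [dif_pos hv]
    exact hone _ h1 _ h2
  have htne : ∀ v : V, c (Sum.inl v) ≠ t v := by
    intro v
    by_cases hv : ∃ u, G.Adj u v
    · rw [htdef]; simp only [dif_pos hv]
      exact hc _ _ (Sym2.mem_mk_right hv.choose v : v ∈ (mkInc G hv.choose_spec).1.2)
    · rw [htdef]; simp only [dif_neg hv]
      exact (Exists.choose_spec (exists_ne (c (Sum.inl v)))).symm
  have hadjne : ∀ a b : V, G.Adj a b → c (Sum.inl a) ≠ t b := by
    intro a b hab
    rw [← ht b (mkInc G hab) (mkInc_mem hab)]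
    exact hc _ _ (Sym2.mem_mk_left a b : a ∈ (mkInc G hab).1.2)
  have ht11 : ∀ a b : V, a ≠ b → (∃ w : G.Walk a b, w.length ≤ 2) → t a ≠ t b := by
    rintro a b hne ⟨w, hw⟩
    cases w with
    | nil => exact absurd rfl hne
    | cons h1 p =>
      cases p with
      | nil =>
        rw [← ht a (mkInc G h1.symm) (mkInc_mem h1.symm),
            ← ht b (mkInc G h1) (mkInc_mem h1)]
        refine hc _ _ ⟨?_, Or.inr (Or.inl (Sym2.eq_swap :
          (mkInc G h1.symm).1.2 = (mkInc G h1).1.2))⟩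
        intro heq
        have h4 : (mkInc G h1.symm).1.1 = (mkInc G h1).1.1 :=
          congrArg (fun i : Inc G => i.1.1) heq
        exact hne (h4 : b = a).symm
      | cons h2 q =>
        cases q with
        | nil =>
          rename_i m
          rw [← ht a (mkInc G h1.symm) (mkInc_mem h1.symm),
              ← ht b (mkInc G h2) (mkInc_mem h2)]
          refine hc _ _ ⟨?_, Or.inl rfl⟩
          intro heq
          have h4 : s(m, a) = s(m, b) := congrArg (fun i : Inc G => i.1.2) heq
          rw [Sym2.eq_iff] at h4
          rcases h4 with ⟨_, h5⟩ | ⟨h3, h5⟩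
          · exact hne h5
          · exact h1.ne h5
        | cons h3 r =>
          simp only [SimpleGraph.Walk.length_cons] at hw; omega
  refine ⟨SimpleGraph.Coloring.mk (fun p => if p.2 = 0 then c (Sum.inl p.1) else t p.1) ?_⟩
  rintro ⟨a, ia⟩ ⟨b, ib⟩ hxy
  rcases hxy with ⟨hx0, hy0, hadj⟩ | ⟨hx1, hy1, hne, w, hw⟩ | ⟨hne2, hor⟩
  · simp only at hx0 hy0
    simp only [hx0, hy0, if_pos rfl]
    exact hc _ _ hadj
  · simp only at hx1 hy1
    simp only [hx1, hy1]
    norm_num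
    exact ht11 a b hne ⟨w, hw⟩
  · simp only at hne2 hor
    have h2 : ∀ i : Fin 2, i = 0 ∨ i = 1 := by decide
    rcases h2 ia with hia | hia <;> rcases h2 ib with hib | hib <;> subst hia <;> subst hib
    · exact absurd rfl hne2
    · show (if (0 : Fin 2) = 0 then c (Sum.inl a) else t a)
        ≠ (if (1 : Fin 2) = 0 then c (Sum.inl b) else t b)
      rw [if_pos rfl, if_neg (by decide)]
      rcases hor with h1 | h1
      · rw [h1]; exact htne b
      · exact hadjne a b h1
    · show (if (1 : Fin 2) = 0 then c (Sum.inl a) else t a)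
        ≠ (if (0 : Fin 2) = 0 then c (Sum.inl b) else t b)
      rw [if_neg (by decide), if_pos rfl]
      rcases hor with h1 | h1
      · rw [h1]; exact (htne b).symm
      · exact (hadjne b a h1.symm).symm
    · exact absurd rfl hne2

end Helpers

/-- For every finite simple graph `G` with at least one edge,
`χ_{vi,1}(G) = χ(T_{vi,1}(G))`. -/
theorem chiVIS_one_eq_chromaticNumber_Tvi1 {V : Type*} [Fintype V] [DecidableEq V]
    (G : SimpleGraph V) (hG : G.edgeSet.Nonempty) :
    (chiVIS G 1 : ℕ∞) = (Tvi1 G).chromaticNumber := by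
  classical
  have hset : {k | ∃ c : VIElem G → Fin k, IsVISColoring G 1 c}
      = {k | (Tvi1 G).Colorable k} := by
    ext k
    exact ⟨fun h => vis_to_colorable G hG h, fun h => colorable_to_vis G h⟩
  have hcol : (Tvi1 G).Colorable (Fintype.card (V × Fin 2)) :=
    (Tvi1 G).colorable_of_fintype
  rw [chiVIS, hset, hcol.chromaticNumber_eq_sInf]
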